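/- Suppose x is real, q > 1, and x³ − 3·((q−2)/(q−1))·x² + ((2q²−7q+11)/(q−1)²)·x − 6·((q^{n+1}−1)/(q−1)³) ≥ 0 where n ≥ 2 and q ≥ 2 is an integer. Then x > (∛(6q^{n+1}−q²−q + (q²−5q+1)·∛(6q^{n+1}−q²−q)))/(q−1) + (q−2)/(q−1). -/

import Mathlib

set_option maxHeartbeats 1000000 in
/-- algebraic core of the lower bound on complete 4-general sets. -/
theorem stmt2 (q n : ℕ) (hn : 2 ≤ n) (hq : 2 ≤ q) (x : ℝ)
    (h : x ^ 3 - 3 * (((q : ℝ) - 2) / ((q : ℝ) - 1)) * x ^ 2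
        + ((2 * (q : ℝ) ^ 2 - 7 * q + 11) / ((q : ℝ) - 1) ^ 2) * x
        - 6 * (((q : ℝ) ^ (n + 1) - 1) / ((q : ℝ) - 1) ^ 3) ≥ 0) :
    x > (6 * (q : ℝ) ^ (n + 1) - q ^ 2 - q
          + ((q : ℝ) ^ 2 - 5 * q + 1) *
            (6 * (q : ℝ) ^ (n + 1) - q ^ 2 - q) ^ ((1 : ℝ) / 3)) ^ ((1 : ℝ) / 3)
        / ((q : ℝ) - 1) + ((q : ℝ) - 2) / ((q : ℝ) - 1) := by
  have hq2 : (2:ℝ) ≤ (q:ℝ) := by exact_mod_cast hq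
  set Q : ℝ := (q:ℝ) with hQdef
  have hc : (0:ℝ) < Q - 1 := by linarith
  set M : ℝ := 6 * Q ^ (n + 1) - Q ^ 2 - Q with hMdef
  set A : ℝ := Q ^ 2 - 5 * Q + 1 with hAdef
  have hpow : Q ^ 3 ≤ Q ^ (n + 1) := by
    apply pow_le_pow_right₀ (by linarith) (by omega)
  have hM5 : 5 * Q ^ 3 ≤ M := by
    rw [hMdef]
    nlinarith [hpow, sq_nonneg Q]
  have hMpos : (0:ℝ) < M := by nlinarith
  set m : ℝ := M ^ ((1:ℝ)/3) with hmdef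
  have hmpos : 0 < m := Real.rpow_pos_of_pos hMpos _
  have hm3 : m ^ 3 = M := by
    rw [hmdef, ← Real.rpow_natCast (M ^ ((1:ℝ)/3)) 3, ← Real.rpow_mul hMpos.le]
    norm_num
  have hm3' : 3 ≤ m := by nlinarith [sq_nonneg m, sq_nonneg (m - 3)]
  have hAlb : -(21/4 : ℝ) ≤ A := by
    rw [hAdef]; nlinarith [sq_nonneg (2 * Q - 5)]
  have hKpos : (0:ℝ) < M + A * m := by
    nlinarith [mul_le_mul_of_nonneg_right hAlb hmpos.le, sq_nonneg m]
  set B : ℝ := (M + A * m) ^ ((1:ℝ)/3) with hBdef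
  have hBpos : 0 < B := Real.rpow_pos_of_pos hKpos _
  have hB3 : B ^ 3 = M + A * m := by
    rw [hBdef, ← Real.rpow_natCast ((M + A * m) ^ ((1:ℝ)/3)) 3, ← Real.rpow_mul hKpos.le]
    norm_num
  clear_value m B
  obtain ⟨hgB, h3B⟩ : (B ^ 3 - A * B - M < 0) ∧ (4 * A ≤ 3 * B ^ 2) := by
    rcases le_or_gt (q : ℕ) 4 with hq4 | hq5
    · -- q ∈ {2,3,4}: A < 0
      have hQ4 : Q ≤ 4 := by rw [hQdef]; exact_mod_cast hq4
      have hAneg : A < 0 := by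
        rw [hAdef]
        nlinarith [mul_nonneg (by linarith : (0:ℝ) ≤ Q - 2) (by linarith : (0:ℝ) ≤ 4 - Q)]
      have hBm : B < m := by
        by_contra hcon
        push_neg at hcon
        have h1 : m ^ 3 ≤ B ^ 3 := pow_le_pow_left₀ hmpos.le hcon 3
        have h2 : A * m < 0 := mul_neg_of_neg_of_pos hAneg hmpos
        linarith
      constructor
      · have h2 : A * (m - B) < 0 := mul_neg_of_neg_of_pos hAneg (by linarith)
        nlinarith [h2]
      · nlinarith [sq_nonneg B]
    · -- q ≥ 5: A ≥ 1
      have hQ5 : (5:ℝ) ≤ Q := by rw [hQdef]; exact_mod_cast hq5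
      have hApos : (0:ℝ) < A := by rw [hAdef]; nlinarith
      have hmB : m < B := by
        by_contra hcon
        push_neg at hcon
        have h1 : B ^ 3 ≤ m ^ 3 := pow_le_pow_left₀ hBpos.le hcon 3
        have h2 : 0 < A * m := mul_pos hApos hmpos
        linarith
      have h32 : 3 * Q ≤ 2 * m := by
        nlinarith [sq_nonneg (2 * m - 3 * Q), sq_nonneg (2 * m + 3 * Q), mul_pos hmpos hmpos]
      constructor
      · have h2 : 0 < A * (B - m) := mul_pos hApos (by linarith)
        nlinarith [h2]
      · have hA2 : A ≤ Q ^ 2 := by rw [hAdef]; nlinarith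
        nlinarith [hmB, h32, hA2]
  -- transform the hypothesis
  set z : ℝ := (Q - 1) * x - (Q - 2) with hzdef
  have hcne : Q - 1 ≠ 0 := ne_of_gt hc
  have key : z ^ 3 - A * z - M
      = (Q - 1) ^ 3 * (x ^ 3 - 3 * ((Q - 2) / (Q - 1)) * x ^ 2
        + ((2 * Q ^ 2 - 7 * Q + 11) / (Q - 1) ^ 2) * x
        - 6 * ((Q ^ (n + 1) - 1) / (Q - 1) ^ 3)) := by
    rw [hzdef, hMdef, hAdef]
    field_simp
    ring
  have hz : 0 ≤ z ^ 3 - A * z - M := by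
    rw [key]
    exact mul_nonneg (by positivity) h
  clear_value z
  have hzB : B < z := by
    by_contra hcon
    push_neg at hcon
    have hfac : (0:ℝ) ≤ z ^ 2 + z * B + B ^ 2 - A := by
      nlinarith [sq_nonneg (2 * z + B), h3B]
    nlinarith [mul_nonneg (sub_nonneg.2 hcon) hfac]
  rw [gt_iff_lt, ← add_div, div_lt_iff₀ hc]
  rw [hzdef] at hzB
  nlinarith [hzB]
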